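/- arXiv:0910.0283 — 5 statements merged into one kernel-verified Lean document; each statement's English description precedes it below -/
import Mathlib

section
/- Let A : X → Y be a bijective bounded linear operator between Banach spaces. If ‖A T A⁻¹‖ ≤ ‖T‖ for all invertible operators T ∈ B(X), then A/‖A‖ is a bijective isometry; that is, A is a scalar multiple of an isometry. -/
open Metric Set Pointwise

noncomputable def minMod {X Y : Type*} [NormedAddCommGroup X] [NormedSpace ℂ X]
    [NormedAddCommGroup Y] [NormedSpace ℂ Y] (T : X →L[ℂ] Y) : ℝ :=
  sInf ((fun x => ‖T x‖) '' {x | ‖x‖ = 1})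

noncomputable def surjMod {X Y : Type*} [NormedAddCommGroup X] [NormedSpace ℂ X]
    [NormedAddCommGroup Y] [NormedSpace ℂ Y] (T : X →L[ℂ] Y) : ℝ :=
  sSup {ε : ℝ | 0 ≤ ε ∧ ε • closedBall (0 : Y) 1 ⊆ T '' closedBall (0 : X) 1}

noncomputable def redMinMod {X Y : Type*} [NormedAddCommGroup X] [NormedSpace ℂ X]
    [NormedAddCommGroup Y] [NormedSpace ℂ Y] (T : X →L[ℂ] Y) : ℝ :=
  sInf ((fun x => ‖T x‖) '' {x | 1 ≤ infDist x (LinearMap.ker (T : X →ₗ[ℂ] Y) : Set X)})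

variable {X Y : Type*} [NormedAddCommGroup X] [NormedSpace ℂ X] [CompleteSpace X]
  [NormedAddCommGroup Y] [NormedSpace ℂ Y] [CompleteSpace Y]

lemma key1 (A : X ≃L[ℂ] Y)
    (h : ∀ T : X ≃L[ℂ] X,
      ‖(A : X →L[ℂ] Y).comp (((T : X →L[ℂ] X)).comp (A.symm : Y →L[ℂ] X))‖
        ≤ ‖(T : X →L[ℂ] X)‖)
    {x y : X} {f : X →L[ℂ] ℂ} (hx : ‖x‖ = 1) (hy : ‖y‖ = 1)
    (hf : ‖f‖ = 1) (hfx : f x = 1) (hfy : f y ≠ 0) :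
    ‖A y‖ ≤ ‖A x‖ := by
  have hAx : 0 < ‖A x‖ := by
    rw [norm_pos_iff]
    intro h0
    have : x = 0 := by
      have := A.injective (h0.trans (map_zero A).symm)
      exact this
    simp [this] at hx
  have main : ∀ t : ℝ, 0 < t → t * ‖A y‖ ≤ (t + 2) * ‖A x‖ := by
    intro t ht
    set u : X := (t : ℂ) • y - x with hu
    have hfu : f u = t * f y - 1 := by
      simp [hu, hfx]
    have htne : (t : ℂ) ≠ 0 := by exact_mod_cast ht.ne'
    have hne : (t : ℂ) * f y ≠ 0 := mul_ne_zero htne hfy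
    obtain ⟨a, ha1⟩ : ∃ a : ℂ, a * ((t : ℂ) * f y) = 1 := ⟨_, inv_mul_cancel₀ hne⟩
    set Tf : X →L[ℂ] X := ContinuousLinearMap.id ℂ X + f.smulRight u with hTf
    set Tg : X →L[ℂ] X := ContinuousLinearMap.id ℂ X - a • f.smulRight u with hTg
    have hTfz : ∀ z, Tf z = z + f z • u := by intro z; simp [hTf]
    have hTgz : ∀ z, Tg z = z - (a * f z) • u := by intro z; simp [hTg, smul_smul]
    have hl : Function.LeftInverse Tg Tf := by
      intro z
      rw [hTfz, hTgz]
      rw [map_add, map_smul, hfu]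
      match_scalars
      · ring
      · simp only [smul_eq_mul]
        linear_combination (-(f z) * (t : ℂ)) * ha1
      · simp only [smul_eq_mul]
        linear_combination (f z) * ha1
    have hr : Function.RightInverse Tg Tf := by
      intro z
      rw [hTgz, hTfz]
      rw [map_sub, map_smul, hfu]
      match_scalars
      · ring
      · simp only [smul_eq_mul]
        linear_combination (-(f z) * (t : ℂ)) * ha1
      · simp only [smul_eq_mul]
        linear_combination (f z) * ha1
    set T : X ≃L[ℂ] X := ContinuousLinearEquiv.equivOfInverse Tf Tg hl hr with hT
    have hcoe : (T : X →L[ℂ] X) = Tf := rfl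
    have hunorm : ‖u‖ ≤ t + 1 := by
      calc ‖u‖ ≤ ‖(t:ℂ) • y‖ + ‖x‖ := norm_sub_le _ _
        _ = t + 1 := by
          rw [norm_smul, hy, hx, Complex.norm_real, Real.norm_of_nonneg ht.le]; ring
    have hTfnorm : ‖Tf‖ ≤ t + 2 := by
      apply ContinuousLinearMap.opNorm_le_bound _ (by linarith)
      intro z
      rw [hTfz]
      calc ‖z + f z • u‖ ≤ ‖z‖ + ‖f z‖ * ‖u‖ := by
            refine (norm_add_le _ _).trans ?_
            rw [norm_smul]
        _ ≤ ‖z‖ + (‖f‖ * ‖z‖) * (t + 1) := by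
            have h1 : ‖f z‖ ≤ ‖f‖ * ‖z‖ := f.le_opNorm z
            have h2 : (0:ℝ) ≤ ‖f z‖ := norm_nonneg _
            nlinarith [norm_nonneg z, norm_nonneg (f z)]
        _ = (t + 2) * ‖z‖ := by rw [hf]; ring
    have hTfx : Tf x = (t : ℂ) • y := by
      rw [hTfz, hfx, hu]
      module
    have happ : ((A : X →L[ℂ] Y).comp ((Tf).comp (A.symm : Y →L[ℂ] X))) (A x)
        = (t : ℂ) • (A y) := by
      simp [ContinuousLinearMap.comp_apply, hTfx]
    have hle := h T
    rw [hcoe] at hle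
    calc t * ‖A y‖ = ‖(t:ℂ) • (A y)‖ := by
          rw [norm_smul, Complex.norm_real, Real.norm_of_nonneg ht.le]
      _ = ‖((A : X →L[ℂ] Y).comp ((Tf).comp (A.symm : Y →L[ℂ] X))) (A x)‖ := by rw [happ]
      _ ≤ ‖(A : X →L[ℂ] Y).comp ((Tf).comp (A.symm : Y →L[ℂ] X))‖ * ‖A x‖ :=
          ContinuousLinearMap.le_opNorm _ _
      _ ≤ (t + 2) * ‖A x‖ := by
          apply mul_le_mul_of_nonneg_right _ (norm_nonneg _)
          exact hle.trans hTfnorm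
  refine le_of_forall_pos_le_add ?_
  intro ε hε
  set t : ℝ := 2 * ‖A x‖ / ε with htdef
  have ht : 0 < t := by positivity
  have h1 := main t ht
  have h4 : 2 * ‖A x‖ = ε * t := by
    rw [htdef]; field_simp
  have : t * ‖A y‖ ≤ t * (‖A x‖ + ε) := by
    calc t * ‖A y‖ ≤ (t + 2) * ‖A x‖ := h1
      _ = t * ‖A x‖ + 2 * ‖A x‖ := by ring
      _ = t * ‖A x‖ + ε * t := by rw [h4]
      _ = t * (‖A x‖ + ε) := by ring
  exact le_of_mul_le_mul_left this ht

lemma key2 (A : X ≃L[ℂ] Y)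
    (h : ∀ T : X ≃L[ℂ] X,
      ‖(A : X →L[ℂ] Y).comp (((T : X →L[ℂ] X)).comp (A.symm : Y →L[ℂ] X))‖
        ≤ ‖(T : X →L[ℂ] X)‖)
    {x y : X} (hx : ‖x‖ = 1) (hy : ‖y‖ = 1) :
    ‖A y‖ ≤ ‖A x‖ := by
  have hx0 : x ≠ 0 := by intro h0; rw [h0, norm_zero] at hx; norm_num at hx
  obtain ⟨f, hf, hfx0⟩ := exists_dual_vector ℂ x (norm_ne_zero_iff.mpr hx0)
  have hfx : f x = 1 := by rw [hfx0, hx]; norm_num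
  by_cases hfy : f y = 0
  swap
  · exact key1 A h hx hy hf hfx hfy
  have hAx : 0 < ‖A x‖ := by
    rw [norm_pos_iff]
    intro h0
    exact hx0 (A.injective (h0.trans (map_zero A).symm))
  refine le_of_forall_pos_le_add ?_
  intro ε hε
  set s : ℝ := min (ε / (2 * ‖A x‖)) (1/2) with hs
  have hs0 : 0 < s := lt_min (by positivity) (by norm_num)
  have hs2 : s ≤ 1/2 := min_le_right _ _
  have hsε : 2 * s * ‖A x‖ ≤ ε := by
    have h1 : s ≤ ε / (2 * ‖A x‖) := min_le_left _ _
    rw [le_div_iff₀ (by positivity)] at h1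
    linarith
  set y' : X := y + (s : ℂ) • x with hy'
  have hy'le : ‖y'‖ ≤ 1 + s := by
    calc ‖y'‖ ≤ ‖y‖ + ‖(s:ℂ) • x‖ := norm_add_le _ _
      _ = 1 + s := by
        rw [hy, norm_smul, hx, Complex.norm_real, Real.norm_of_nonneg hs0.le]; ring
  have hy'ge : 1 - s ≤ ‖y'‖ := by
    have hyy : y = y' - (s:ℂ) • x := by rw [hy']; abel
    have h1 : ‖y‖ ≤ ‖y'‖ + ‖(s:ℂ) • x‖ := by
      conv_lhs => rw [hyy]
      exact norm_sub_le _ _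
    rw [hy, norm_smul, hx, Complex.norm_real, Real.norm_of_nonneg hs0.le] at h1
    linarith
  have hy'pos : 0 < ‖y'‖ := by linarith
  set w : X := ((‖y'‖⁻¹ : ℝ) : ℂ) • y' with hw
  have hwnorm : ‖w‖ = 1 := by
    rw [hw, norm_smul, Complex.norm_real, Real.norm_of_nonneg (by positivity)]
    field_simp
  have hfw : f w ≠ 0 := by
    rw [hw, map_smul, hy', map_add, map_smul, hfy, hfx]
    simp only [zero_add, mul_one, smul_eq_mul]
    apply mul_ne_zero
    · exact_mod_cast inv_ne_zero hy'pos.ne'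
    · exact_mod_cast hs0.ne'
  have hkey := key1 A h hx hwnorm hf hfx hfw
  have hAy' : ‖A y'‖ ≤ (1 + s) * ‖A x‖ := by
    have hA : A y' = ((‖y'‖ : ℝ) : ℂ) • A w := by
      rw [hw, map_smul, smul_smul]
      norm_cast
      rw [mul_inv_cancel₀ hy'pos.ne']
      simp
    rw [hA, norm_smul, Complex.norm_real, Real.norm_of_nonneg hy'pos.le]
    exact mul_le_mul hy'le hkey (norm_nonneg _) (by linarith)
  have hfin : ‖A y‖ ≤ ‖A y'‖ + s * ‖A x‖ := by
    have hyy : y = y' - (s:ℂ) • x := by rw [hy']; abel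
    calc ‖A y‖ = ‖A y' - (s:ℂ) • A x‖ := by
          conv_lhs => rw [hyy]
          rw [map_sub, map_smul]
      _ ≤ ‖A y'‖ + ‖(s:ℂ) • A x‖ := norm_sub_le _ _
      _ = ‖A y'‖ + s * ‖A x‖ := by
          rw [norm_smul, Complex.norm_real, Real.norm_of_nonneg hs0.le]
  linarith

theorem stmt11 (A : X ≃L[ℂ] Y)
    (h : ∀ T : X ≃L[ℂ] X,
      ‖(A : X →L[ℂ] Y).comp (((T : X →L[ℂ] X)).comp (A.symm : Y →L[ℂ] X))‖
        ≤ ‖(T : X →L[ℂ] X)‖) :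
    ∀ x : X, ‖A x‖ = ‖(A : X →L[ℂ] Y)‖ * ‖x‖ := by
  have hconst : ∀ v w : X, ‖v‖ = 1 → ‖w‖ = 1 → ‖A v‖ = ‖A w‖ := fun v w hv hw =>
    le_antisymm (key2 A h hw hv) (key2 A h hv hw)
  intro z
  by_cases hz : z = 0
  · simp [hz]
  have hznorm : 0 < ‖z‖ := norm_pos_iff.mpr hz
  set zz : X := ((‖z‖⁻¹ : ℝ) : ℂ) • z with hzh
  have hzz : ‖zz‖ = 1 := by
    rw [hzh, norm_smul, Complex.norm_real, Real.norm_of_nonneg (by positivity)]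
    field_simp
  have hscale : ∀ v : X, v ≠ 0 → ‖A v‖ = ‖A (((‖v‖⁻¹ : ℝ) : ℂ) • v)‖ * ‖v‖ := by
    intro v hv
    have hvpos : 0 < ‖v‖ := norm_pos_iff.mpr hv
    rw [map_smul, norm_smul, Complex.norm_real, Real.norm_of_nonneg (by positivity)]
    field_simp
  have hopeq : ‖(A : X →L[ℂ] Y)‖ = ‖A zz‖ := by
    apply le_antisymm
    · apply ContinuousLinearMap.opNorm_le_bound _ (norm_nonneg _)
      intro v
      by_cases hv : v = 0
      · simp [hv]
      have hv1 : ‖(((‖v‖⁻¹ : ℝ) : ℂ) • v)‖ = 1 := by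
        rw [norm_smul, Complex.norm_real,
          Real.norm_of_nonneg (by positivity)]
        field_simp [norm_pos_iff.mpr hv |>.ne']
      calc ‖(A : X →L[ℂ] Y) v‖ = ‖A (((‖v‖⁻¹ : ℝ) : ℂ) • v)‖ * ‖v‖ := hscale v hv
        _ = ‖A zz‖ * ‖v‖ := by rw [hconst _ _ hv1 hzz]
        _ ≤ ‖A zz‖ * ‖v‖ := le_rfl
    · calc ‖A zz‖ = ‖(A : X →L[ℂ] Y) zz‖ := rfl
        _ ≤ ‖(A : X →L[ℂ] Y)‖ * ‖zz‖ := ContinuousLinearMap.le_opNorm _ _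
        _ = ‖(A : X →L[ℂ] Y)‖ := by rw [hzz, mul_one]
  rw [hopeq]
  rw [hscale z hz]
end

section
/- Let A : X → Y be a bijective bounded linear operator between Banach spaces. If ‖A T A⁻¹‖ ≥ ‖T‖ for all invertible operators T ∈ B(X), then A is a scalar multiple of an isometry. -/
open Metric Set Pointwise

noncomputable def rankOnePerturb {X : Type*} [NormedAddCommGroup X] [NormedSpace ℂ X]
    (φ : X →L[ℂ] ℂ) (v : X) (l : ℂ) (hl : 1 + l * φ v ≠ 0) : X ≃L[ℂ] X :=
  ContinuousLinearEquiv.unitsEquiv ℂ X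
  { val := ContinuousLinearMap.id ℂ X + (l • φ).smulRight v
    inv := ContinuousLinearMap.id ℂ X - ((l / (1 + l * φ v)) • φ).smulRight v
    val_inv := by
      ext z
      simp only [ContinuousLinearMap.mul_apply, ContinuousLinearMap.add_apply,
        ContinuousLinearMap.sub_apply, ContinuousLinearMap.id_apply,
        ContinuousLinearMap.smulRight_apply, ContinuousLinearMap.smul_apply,
        ContinuousLinearMap.one_apply, map_sub, map_smul]
      rw [smul_eq_mul, smul_eq_mul]
      have hv : v + (l • φ v) • v = (1 + l * φ v) • v := by
        rw [add_smul, one_smul, smul_eq_mul]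
      rw [hv, smul_smul]
      have h2 : l / (1 + l * φ v) * φ z * (1 + l * φ v) = l * φ z := by
        field_simp
      rw [h2, add_sub_cancel_right]
    inv_val := by
      ext z
      simp only [ContinuousLinearMap.mul_apply, ContinuousLinearMap.add_apply,
        ContinuousLinearMap.sub_apply, ContinuousLinearMap.id_apply,
        ContinuousLinearMap.smulRight_apply, ContinuousLinearMap.smul_apply,
        ContinuousLinearMap.one_apply, map_add, map_smul]
      rw [smul_eq_mul, smul_eq_mul]
      have hv : v - ((l / (1 + l * φ v)) • φ v) • v = (1 - l / (1 + l * φ v) * φ v) • v := by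
        rw [sub_smul, one_smul, smul_eq_mul]
      rw [hv, smul_smul]
      have h2 : l * φ z * (1 - l / (1 + l * φ v) * φ v) = l / (1 + l * φ v) * φ z := by
        field_simp
        ring
      rw [h2, sub_add_cancel] }

theorem rankOnePerturb_coe {X : Type*} [NormedAddCommGroup X] [NormedSpace ℂ X]
    (φ : X →L[ℂ] ℂ) (v : X) (l : ℂ) (hl : 1 + l * φ v ≠ 0) :
    (rankOnePerturb φ v l hl : X →L[ℂ] X) = ContinuousLinearMap.id ℂ X + (l • φ).smulRight v :=
  rfl

theorem rankOnePerturb_apply {X : Type*} [NormedAddCommGroup X] [NormedSpace ℂ X]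
    (φ : X →L[ℂ] ℂ) (v : X) (l : ℂ) (hl : 1 + l * φ v ≠ 0) (z : X) :
    rankOnePerturb φ v l hl z = z + (l * φ z) • v := by
  show (rankOnePerturb φ v l hl : X →L[ℂ] X) z = _
  rw [rankOnePerturb_coe]
  simp [smul_smul]

theorem aux_stmt12 {X Y : Type*} [NormedAddCommGroup X] [NormedSpace ℂ X] [CompleteSpace X]
    [NormedAddCommGroup Y] [NormedSpace ℂ Y] [CompleteSpace Y] (A : X ≃L[ℂ] Y)
    (h : ∀ T : X ≃L[ℂ] X,
      ‖(T : X →L[ℂ] X)‖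
        ≤ ‖(A : X →L[ℂ] Y).comp (((T : X →L[ℂ] X)).comp (A.symm : Y →L[ℂ] X))‖) :
    ∃ (c : ℂ) (U : X ≃ₗᵢ[ℂ] Y), ∀ x : X, A x = c • U x := by
  set M : ℝ := ‖(A : X →L[ℂ] Y)‖ with hM
  by_cases hX : ∀ x : X, ‖A x‖ = M * ‖x‖
  · by_cases hc : (M : ℂ) = 0
    · -- A = 0, spaces trivial
      have hM0 : M = 0 := by exact_mod_cast hc
      have hz : ∀ x : X, ‖x‖ = 0 := by
        intro x
        have h1 : ‖A x‖ = 0 := by rw [hX x, hM0, zero_mul]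
        have h2 : A x = 0 := norm_eq_zero.mp h1
        have h3 : x = 0 := by
          have := A.injective (by simpa using h2 : A x = A 0)
          simpa using this
        simp [h3]
      refine ⟨1, ⟨A.toLinearEquiv, fun x => ?_⟩, fun x => by simp⟩
      show ‖A x‖ = ‖x‖
      rw [hz x, hX x, hz x, mul_zero]
    · refine ⟨(M : ℂ), ⟨A.toLinearEquiv.trans
        (LinearEquiv.smulOfNeZero ℂ Y ((M : ℂ))⁻¹ (inv_ne_zero hc)), fun x => ?_⟩, fun x => ?_⟩
      · show ‖((M : ℂ))⁻¹ • A x‖ = ‖x‖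
        have hMpos : (0:ℝ) ≤ M := norm_nonneg _
        rw [norm_smul, norm_inv, Complex.norm_real, Real.norm_eq_abs, abs_of_nonneg hMpos,
          hX x]
        have : M ≠ 0 := by exact_mod_cast hc
        field_simp
      · show A x = (M : ℂ) • (((M : ℂ))⁻¹ • A x)
        rw [smul_inv_smul₀ hc]
  · exfalso
    push_neg at hX
    obtain ⟨x, hx⟩ := hX
    have hle : ‖A x‖ ≤ M * ‖x‖ := (A : X →L[ℂ] Y).le_opNorm x
    have hlt : ‖A x‖ < M * ‖x‖ := lt_of_le_of_ne hle hx
    have hx0 : x ≠ 0 := by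
      rintro rfl; simp at hx
    have hxn : (0:ℝ) < ‖x‖ := norm_pos_iff.mpr hx0
    set x1 : X := ((‖x‖ : ℂ))⁻¹ • x with hx1def
    have hx1 : ‖x1‖ = 1 := by
      rw [hx1def, norm_smul, norm_inv, Complex.norm_real, Real.norm_eq_abs,
        abs_of_nonneg hxn.le, inv_mul_cancel₀ hxn.ne']
    set a : ℝ := ‖A x1‖ with ha
    have haM : a < M := by
      have : A x1 = ((‖x‖ : ℂ))⁻¹ • A x := by rw [hx1def, map_smul]
      rw [ha, this, norm_smul, norm_inv, Complex.norm_real, Real.norm_eq_abs,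
        abs_of_nonneg hxn.le]
      calc ‖x‖⁻¹ * ‖A x‖ < ‖x‖⁻¹ * (M * ‖x‖) := by
            exact mul_lt_mul_of_pos_left hlt (inv_pos.mpr hxn)
        _ = M := by field_simp
    obtain ⟨x₀, hx₀norm, hx₀⟩ := (A : X →L[ℂ] Y).exists_lt_apply_of_lt_opNorm haM
    have hAx₀ : A x₀ ≠ 0 := by
      intro hz
      rw [show (A : X →L[ℂ] Y) x₀ = A x₀ from rfl, hz] at hx₀
      simp at hx₀
      exact absurd hx₀ (not_lt.mpr (norm_nonneg _))
    obtain ⟨g, hg1, hg2⟩ := exists_dual_vector ℂ (A x₀) (norm_ne_zero_iff.mpr hAx₀)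
    set φ : X →L[ℂ] ℂ := g.comp (A : X →L[ℂ] Y) with hφ
    set u : ℂ := if φ x1 = 0 then 1 else (‖φ x1‖ : ℂ) / φ x1 with hu
    have hu1 : ‖u‖ = 1 := by
      rw [hu]
      split_ifs with hz
      · simp
      · rw [norm_div, Complex.norm_real, Real.norm_eq_abs, abs_of_nonneg (norm_nonneg _),
          div_self (norm_ne_zero_iff.mpr hz)]
    have huφ : u * φ x1 = (‖φ x1‖ : ℂ) := by
      rw [hu]
      split_ifs with hz
      · simp [hz]
      · rw [div_mul_cancel₀ _ hz]
    have key : ∀ t : ℝ, 0 < t → t * ‖A x₀‖ ≤ 2 + t * a := by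
      intro t ht
      set l : ℂ := (t : ℂ) * u with hl
      have hnel : 1 + l * φ x1 ≠ 0 := by
        rw [hl, mul_assoc, huφ]
        have : (1 : ℂ) + (t : ℂ) * (‖φ x1‖ : ℂ) = ((1 + t * ‖φ x1‖ : ℝ) : ℂ) := by push_cast; ring
        rw [this, Ne, Complex.ofReal_eq_zero]
        positivity
      have hln : ‖l‖ = t := by
        rw [hl, norm_mul, hu1, mul_one, Complex.norm_real, Real.norm_eq_abs, abs_of_pos ht]
      set T := rankOnePerturb φ x1 l hnel with hT
      have hub : ‖(T : X →L[ℂ] X)‖ ≤ 1 + t * a := by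
        have heq : (A : X →L[ℂ] Y).comp (((T : X →L[ℂ] X)).comp (A.symm : Y →L[ℂ] X))
            = ContinuousLinearMap.id ℂ Y + (l • g).smulRight (A x1) := by
          ext w
          simp only [ContinuousLinearMap.comp_apply, ContinuousLinearMap.add_apply,
            ContinuousLinearMap.id_apply, ContinuousLinearMap.smulRight_apply,
            ContinuousLinearMap.smul_apply, ContinuousLinearEquiv.coe_coe]
          rw [hT, rankOnePerturb_apply, map_add, map_smul, A.apply_symm_apply]
          congr 1
          rw [hφ]
          simp [smul_smul]
        calc ‖(T : X →L[ℂ] X)‖ ≤ ‖(A : X →L[ℂ] Y).comp (((T : X →L[ℂ] X)).comp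
              (A.symm : Y →L[ℂ] X))‖ := h T
          _ = ‖ContinuousLinearMap.id ℂ Y + (l • g).smulRight (A x1)‖ := by rw [heq]
          _ ≤ ‖ContinuousLinearMap.id ℂ Y‖ + ‖(l • g).smulRight (A x1)‖ := norm_add_le _ _
          _ ≤ 1 + t * a := by
              gcongr
              · exact ContinuousLinearMap.norm_id_le
              · rw [ContinuousLinearMap.norm_smulRight_apply, norm_smul, hg1, hln, mul_one,
                  ha, show A x1 = (A : X →L[ℂ] Y) x1 from rfl]
      have hlb : t * ‖A x₀‖ ≤ ‖(T : X →L[ℂ] X)‖ + 1 := by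
        have hTx : T x₀ = x₀ + (l * φ x₀) • x1 := by rw [hT, rankOnePerturb_apply]
        have h1 : ‖(l * φ x₀) • x1‖ = t * ‖A x₀‖ := by
          rw [norm_smul, hx1, mul_one, norm_mul, hln, hφ]
          simp only [ContinuousLinearMap.comp_apply, ContinuousLinearEquiv.coe_coe]
          rw [hg2]
          simp [abs_of_nonneg (norm_nonneg _)]
        have h2 : ‖(l * φ x₀) • x1‖ ≤ ‖T x₀‖ + ‖x₀‖ := by
          calc ‖(l * φ x₀) • x1‖ = ‖T x₀ - x₀‖ := by rw [hTx, add_sub_cancel_left]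
            _ ≤ ‖T x₀‖ + ‖x₀‖ := norm_sub_le _ _
        have h3 : ‖T x₀‖ ≤ ‖(T : X →L[ℂ] X)‖ := by
          calc ‖T x₀‖ = ‖(T : X →L[ℂ] X) x₀‖ := rfl
            _ ≤ ‖(T : X →L[ℂ] X)‖ * ‖x₀‖ := (T : X →L[ℂ] X).le_opNorm x₀
            _ ≤ ‖(T : X →L[ℂ] X)‖ * 1 := by
                gcongr
            _ = ‖(T : X →L[ℂ] X)‖ := mul_one _
        linarith
      linarith
    -- contradiction
    have hgap : (0:ℝ) < ‖A x₀‖ - a := by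
      have : a < ‖A x₀‖ := hx₀
      linarith
    have := key (3 / (‖A x₀‖ - a)) (by positivity)
    have h3 : (3 / (‖A x₀‖ - a)) * (‖A x₀‖ - a) = 3 := by field_simp
    nlinarith [this, h3]


variable {X Y : Type*} [NormedAddCommGroup X] [NormedSpace ℂ X] [CompleteSpace X]
  [NormedAddCommGroup Y] [NormedSpace ℂ Y] [CompleteSpace Y]

theorem stmt12 (A : X ≃L[ℂ] Y)
    (h : ∀ T : X ≃L[ℂ] X,
      ‖(T : X →L[ℂ] X)‖
        ≤ ‖(A : X →L[ℂ] Y).comp (((T : X →L[ℂ] X)).comp (A.symm : Y →L[ℂ] X))‖) :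
    ∃ (c : ℂ) (U : X ≃ₗᵢ[ℂ] Y), ∀ x : X, A x = c • U x := aux_stmt12 A h
end

section
/- Let A : X → Y be a bijective bounded linear operator between Banach spaces. Then ‖A T A⁻¹‖ = ‖T‖ for all invertible T ∈ B(X) if and only if A is a scalar multiple of an isometry. -/
open Metric Set Pointwise

set_option maxHeartbeats 1000000

variable {X Y : Type*} [NormedAddCommGroup X] [NormedSpace ℂ X] [CompleteSpace X]
  [NormedAddCommGroup Y] [NormedSpace ℂ Y] [CompleteSpace Y]

lemma norm_one_add_sub_bound {Z : Type*} [NormedAddCommGroup Z] [NormedSpace ℂ Z]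
    (B : Z →L[ℂ] Z) : |‖(1 : Z →L[ℂ] Z) + B‖ - ‖B‖| ≤ 1 := by
  have h1 : ‖(1 : Z →L[ℂ] Z)‖ ≤ 1 := ContinuousLinearMap.norm_id_le
  rw [abs_le]
  constructor
  · have hB : ‖B‖ = ‖((1 : Z →L[ℂ] Z) + B) - 1‖ := by congr 1; abel
    have := norm_sub_le ((1 : Z →L[ℂ] Z) + B) 1
    rw [hB]
    linarith
  · have := norm_add_le (1 : Z →L[ℂ] Z) B
    linarith

/-- Key: conjugation invariance of norms of invertibles transfers rank-one norm data. -/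
lemma conj_rank_one (A : X ≃L[ℂ] Y)
    (h : ∀ T : X ≃L[ℂ] X,
      ‖(A : X →L[ℂ] Y).comp (((T : X →L[ℂ] X)).comp (A.symm : Y →L[ℂ] X))‖
        = ‖(T : X →L[ℂ] X)‖)
    (f : X →L[ℂ] ℂ) (x : X) :
    ‖f‖ * ‖x‖ = ‖f.comp (A.symm : Y →L[ℂ] X)‖ * ‖A x‖ := by
  set g : Y →L[ℂ] ℂ := f.comp (A.symm : Y →L[ℂ] X) with hg
  -- main estimate for admissible scalars c
  have key : ∀ c : ℂ, 1 + c * f x ≠ 0 →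
      |‖c‖ * (‖f‖ * ‖x‖) - ‖c‖ * (‖g‖ * ‖A x‖)| ≤ 2 := by
    intro c hc
    set R : X →L[ℂ] X := f.smulRight x with hR
    set d : ℂ := c / (1 + c * f x) with hd
    have hdc : d * (1 + c * f x) = c := div_mul_cancel₀ _ hc
    have hRapp : ∀ y : X, R y = f y • x := fun y => by
      rw [hR, ContinuousLinearMap.smulRight_apply]
    set Rc : X →L[ℂ] X := (1 : X →L[ℂ] X) + c • R with hRc
    set S : X →L[ℂ] X := (1 : X →L[ℂ] X) - d • R with hS
    have hRcApp : ∀ y : X, Rc y = y + (c * f y) • x := by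
      intro y
      simp only [hRc, ContinuousLinearMap.add_apply, ContinuousLinearMap.one_apply,
        ContinuousLinearMap.smul_apply, hRapp, smul_smul]
    have hSApp : ∀ y : X, S y = y - (d * f y) • x := by
      intro y
      simp only [hS, ContinuousLinearMap.sub_apply, ContinuousLinearMap.one_apply,
        ContinuousLinearMap.smul_apply, hRapp, smul_smul]
    have left : ∀ y : X, S (Rc y) = y := by
      intro y
      have h2 : f (Rc y) = f y * (1 + c * f x) := by
        rw [hRcApp y]; simp only [map_add, map_smul, smul_eq_mul]; ring
      rw [hSApp (Rc y), h2, hRcApp y]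
      have h4 : d * (f y * (1 + c * f x)) = c * f y := by
        linear_combination (f y) * hdc
      rw [h4]; abel
    have right : ∀ y : X, Rc (S y) = y := by
      intro y
      have h2 : f (S y) = f y * (1 - d * f x) := by
        rw [hSApp y]; simp only [map_sub, map_smul, smul_eq_mul]; ring
      rw [hRcApp (S y), h2, hSApp y]
      have h4 : c * (f y * (1 - d * f x)) = d * f y := by
        linear_combination (-(f y)) * hdc
      rw [h4]; abel
    set T : X ≃L[ℂ] X := ContinuousLinearEquiv.equivOfInverse Rc S left right with hT
    have hTc : (T : X →L[ℂ] X) = Rc := by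
      ext y
      rw [ContinuousLinearEquiv.coe_coe, hT, ContinuousLinearEquiv.equivOfInverse_apply]
    have hconj : (A : X →L[ℂ] Y).comp (((T : X →L[ℂ] X)).comp (A.symm : Y →L[ℂ] X))
        = (1 : Y →L[ℂ] Y) + c • g.smulRight (A x) := by
      rw [hTc]
      ext y
      simp only [ContinuousLinearMap.comp_apply, ContinuousLinearMap.coe_coe,
        ContinuousLinearEquiv.coe_coe, ContinuousLinearMap.add_apply,
        ContinuousLinearMap.one_apply, ContinuousLinearMap.smul_apply,
        ContinuousLinearMap.smulRight_apply]
      rw [hRcApp]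
      rw [map_add, map_smul, A.apply_symm_apply]
      simp [hg, smul_smul]
    have hnorm := h T
    rw [hconj, hTc, hRc] at hnorm
    have hb1X := norm_one_add_sub_bound (c • R)
    have hb1Y := norm_one_add_sub_bound (c • g.smulRight (A x))
    have e1 : ‖c • R‖ = ‖c‖ * (‖f‖ * ‖x‖) := by
      rw [show ‖c • R‖ = ‖c‖ * ‖R‖ from norm_smul c R, hR,
        ContinuousLinearMap.norm_smulRight_apply]
    have e2 : ‖c • g.smulRight (A x)‖ = ‖c‖ * (‖g‖ * ‖A x‖) := by
      rw [show ‖c • g.smulRight (A x)‖ = ‖c‖ * ‖g.smulRight (A x)‖ from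
        norm_smul c (g.smulRight (A x)), ContinuousLinearMap.norm_smulRight_apply]
    rw [e1] at hb1X
    rw [e2] at hb1Y
    rw [abs_le] at hb1X hb1Y ⊢
    constructor <;> nlinarith [hb1X.1, hb1X.2, hb1Y.1, hb1Y.2]
  -- conclude equality
  by_contra hne
  set a := ‖f‖ * ‖x‖
  set b := ‖g‖ * ‖A x‖
  have hd : 0 < |a - b| := abs_pos.mpr (sub_ne_zero.mpr hne)
  set t₁ : ℝ := 2 / |a - b| + 1 with ht₁
  set t₂ : ℝ := 2 / |a - b| + 2 with ht₂
  have ht₁pos : 0 < t₁ := by positivity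
  have ht₂pos : 0 < t₂ := by positivity
  have hone : (1 + (t₁ : ℂ) * f x ≠ 0) ∨ (1 + (t₂ : ℂ) * f x ≠ 0) := by
    by_contra hcon
    push_neg at hcon
    obtain ⟨h1, h2⟩ := hcon
    have h3 : ((t₁ : ℂ)) * f x = ((t₂ : ℂ)) * f x := by linear_combination h1 - h2
    have hfx : f x ≠ 0 := by
      intro h0; rw [h0, mul_zero, add_zero] at h1; exact one_ne_zero h1
    have h5 : (t₁ : ℂ) = t₂ := mul_right_cancel₀ hfx h3
    have ht : t₁ = t₂ := by exact_mod_cast h5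
    rw [ht₁, ht₂] at ht
    linarith
  have hfinal : ∀ t : ℝ, 0 < t → 1 + (t : ℂ) * f x ≠ 0 → t * |a - b| ≤ 2 := by
    intro t ht hnz
    have := key (t : ℂ) hnz
    rw [Complex.norm_real, Real.norm_eq_abs, abs_of_pos ht, ← mul_sub, abs_mul,
      abs_of_pos ht] at this
    exact this
  have h2d : ∀ t : ℝ, 2 / |a - b| < t → ¬ (t * |a - b| ≤ 2) := by
    intro t htt hle
    have : 2 < t * |a - b| := by
      rw [div_lt_iff₀ hd] at htt
      linarith
    linarith
  rcases hone with h1 | h1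
  · exact h2d t₁ (by rw [ht₁]; nlinarith [hd]) (hfinal t₁ ht₁pos h1)
  · exact h2d t₂ (by rw [ht₂]; nlinarith [hd]) (hfinal t₂ ht₂pos h1)

theorem stmt13 (A : X ≃L[ℂ] Y) :
    (∀ T : X ≃L[ℂ] X,
      ‖(A : X →L[ℂ] Y).comp (((T : X →L[ℂ] X)).comp (A.symm : Y →L[ℂ] X))‖
        = ‖(T : X →L[ℂ] X)‖) ↔
    ∃ (c : ℂ) (U : X ≃ₗᵢ[ℂ] Y), ∀ x : X, A x = c • U x := by
  constructor
  · intro h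
    rcases subsingleton_or_nontrivial X with hX | hX
    · -- trivial case
      refine ⟨1, ⟨A.toLinearEquiv, fun x => ?_⟩, fun x => ?_⟩
      · have hx : x = 0 := Subsingleton.elim x 0
        subst hx
        simp
      · simp
    · obtain ⟨x₀, hx₀⟩ := exists_ne (0 : X)
      obtain ⟨f₀, hf₀norm, hf₀x⟩ := exists_dual_vector ℂ x₀ (norm_ne_zero_iff.mpr hx₀)
      set g₀ : Y →L[ℂ] ℂ := f₀.comp (A.symm : Y →L[ℂ] X) with hg₀
      have hg₀ne : ‖g₀‖ ≠ 0 := by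
        intro hzero
        have : g₀ = 0 := by rwa [norm_eq_zero] at hzero
        have happ : g₀ (A x₀) = f₀ x₀ := by
          simp [hg₀]
        rw [this] at happ
        simp only [ContinuousLinearMap.zero_apply] at happ
        rw [hf₀x] at happ
        have : ‖x₀‖ = 0 := Complex.ofReal_eq_zero.mp happ.symm
        exact hx₀ (norm_eq_zero.mp this)
      have hg₀pos : 0 < ‖g₀‖ := lt_of_le_of_ne (norm_nonneg _) (Ne.symm hg₀ne)
      set r : ℝ := ‖g₀‖⁻¹ with hr
      have hrpos : 0 < r := by positivity
      have hAx : ∀ x : X, ‖A x‖ = r * ‖x‖ := by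
        intro x
        have := conj_rank_one A h f₀ x
        rw [hf₀norm, one_mul, ← hg₀] at this
        field_simp [hr]
        rw [hr, this, ← mul_assoc, inv_mul_cancel₀ hg₀ne, one_mul]
      have hcne : ((r : ℂ)) ≠ 0 := by
        simp only [ne_eq, Complex.ofReal_eq_zero]
        linarith
      set e : X ≃ₗ[ℂ] Y :=
        A.toLinearEquiv.trans (LinearEquiv.smulOfNeZero ℂ Y ((r : ℂ))⁻¹ (inv_ne_zero hcne)) with he
      have heapp : ∀ x : X, e x = ((r : ℂ))⁻¹ • A x := fun x => rfl
      refine ⟨(r : ℂ), ⟨e, fun x => ?_⟩, fun x => ?_⟩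
      · rw [heapp, norm_smul, hAx]
        simp only [norm_inv, Complex.norm_real, Real.norm_eq_abs, abs_of_pos hrpos]
        field_simp
      · show A x = (r : ℂ) • e x
        rw [heapp, smul_inv_smul₀ hcne]
  · rintro ⟨c, U, hU⟩ T
    rcases subsingleton_or_nontrivial X with hX | hX
    · haveI : Subsingleton Y := A.symm.toEquiv.subsingleton
      have h1 : (A : X →L[ℂ] Y).comp (((T : X →L[ℂ] X)).comp (A.symm : Y →L[ℂ] X)) = 0 := by
        ext y; exact Subsingleton.elim _ _
      have h2 : (T : X →L[ℂ] X) = 0 := by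
        ext y; exact Subsingleton.elim _ _
      rw [h1, h2, norm_zero, norm_zero]
    · have hcne : c ≠ 0 := by
        obtain ⟨x₀, hx₀⟩ := exists_ne (0 : X)
        intro hc
        have := hU x₀
        rw [hc, zero_smul] at this
        exact hx₀ (A.injective (by simpa using this))
      have hsymm : ∀ y : Y, A.symm y = c⁻¹ • U.symm y := by
        intro y
        have : A (c⁻¹ • U.symm y) = y := by
          rw [map_smul, hU (U.symm y), LinearIsometryEquiv.apply_symm_apply,
            smul_smul, inv_mul_cancel₀ hcne, one_smul]
        exact (ContinuousLinearEquiv.symm_apply_eq A).mpr this.symm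
      have hcomp : (A : X →L[ℂ] Y).comp (((T : X →L[ℂ] X)).comp (A.symm : Y →L[ℂ] X))
          = (U.toLinearIsometry.toContinuousLinearMap.comp (T : X →L[ℂ] X)).comp
              U.symm.toLinearIsometry.toContinuousLinearMap := by
        ext y
        simp only [ContinuousLinearMap.comp_apply, ContinuousLinearMap.coe_coe,
          ContinuousLinearEquiv.coe_coe, LinearIsometry.coe_toContinuousLinearMap,
          LinearIsometryEquiv.coe_toLinearIsometry]
        rw [hsymm y, map_smul, map_smul, hU, smul_smul, inv_mul_cancel₀ hcne, one_smul]
      rw [hcomp, show U.symm.toLinearIsometry.toContinuousLinearMap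
          = ((U.symm.toContinuousLinearEquiv : Y ≃L[ℂ] X) : Y →L[ℂ] X) from rfl,
        ContinuousLinearMap.opNorm_comp_linearIsometryEquiv,
        LinearIsometry.norm_toContinuousLinearMap_comp]
end

section
/- Let A : X → Y and B : Y → X be bijective bounded linear operators between Banach spaces such that ‖A T B‖ = ‖T‖ for all invertible operators T ∈ B(X). Then there exist bijective linear isometries U : X → Y and V : Y → X and scalars λ, μ ∈ ℂ with |λμ| = 1 such that A = λU and B = μV. -/
open Metric Set Pointwise

variable {X Y : Type*} [NormedAddCommGroup X] [NormedSpace ℂ X] [CompleteSpace X]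
  [NormedAddCommGroup Y] [NormedSpace ℂ Y] [CompleteSpace Y]

open ContinuousLinearMap in
set_option linter.unusedSectionVars false in
set_option linter.unusedVariables false in
lemma key14 [Nontrivial X] (A : X ≃L[ℂ] Y) (B : Y ≃L[ℂ] X)
    (h : ∀ T : X ≃L[ℂ] X,
      ‖(A : X →L[ℂ] Y).comp (((T : X →L[ℂ] X)).comp (B : Y →L[ℂ] X))‖
        = ‖(T : X →L[ℂ] X)‖)
    (f : X →L[ℂ] ℂ) (x : X) :
    ‖f.comp (B : Y →L[ℂ] X)‖ * ‖A x‖ = ‖f‖ * ‖x‖ := by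
  have hC : ‖(A : X →L[ℂ] Y).comp (B : Y →L[ℂ] X)‖ = 1 := by
    have := h (ContinuousLinearEquiv.refl ℂ X)
    simpa [ContinuousLinearMap.norm_id] using this
  set R : X →L[ℂ] X := f.smulRight x with hR
  set D : Y →L[ℂ] Y := (f.comp (B : Y →L[ℂ] X)).smulRight (A x) with hDdef
  have hD : ((A : X →L[ℂ] Y).comp (R.comp (B : Y →L[ℂ] X))) = D := by
    ext y; simp [hR, hDdef]
  have hnR : ‖R‖ = ‖f‖ * ‖x‖ := ContinuousLinearMap.norm_smulRight_apply f x
  have hnD : ‖D‖ = ‖f.comp (B : Y →L[ℂ] X)‖ * ‖A x‖ :=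
    ContinuousLinearMap.norm_smulRight_apply _ _
  -- main estimate for good t
  have main : ∀ t : ℝ, 0 < t → (1 : ℂ) + t * f x ≠ 0 → |‖D‖ - ‖R‖| ≤ 2 / t := by
    intro t ht hne
    set s : ℂ := (t : ℂ) / (1 + t * f x) with hs
    have hkey : (t : ℂ) - s - s * t * f x = 0 := by rw [hs]; field_simp; ring
    have hfun : ∀ z : X, ((1 : X →L[ℂ] X) - s • R) (((1 : X →L[ℂ] X) + (t : ℂ) • R) z) = z := by
      intro z
      simp only [ContinuousLinearMap.add_apply, ContinuousLinearMap.sub_apply,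
        ContinuousLinearMap.smul_apply, ContinuousLinearMap.one_apply, hR,
        ContinuousLinearMap.smulRight_apply, map_add, map_smul, smul_eq_mul, smul_smul]
      match_scalars
      · ring
      · linear_combination f z * hkey
    have hfun2 : ∀ z : X, ((1 : X →L[ℂ] X) + (t : ℂ) • R) (((1 : X →L[ℂ] X) - s • R) z) = z := by
      intro z
      simp only [ContinuousLinearMap.add_apply, ContinuousLinearMap.sub_apply,
        ContinuousLinearMap.smul_apply, ContinuousLinearMap.one_apply, hR,
        ContinuousLinearMap.smulRight_apply, map_sub, map_smul, smul_eq_mul, smul_smul]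
      match_scalars
      · ring
      · linear_combination f z * hkey
    set E : X ≃L[ℂ] X := ContinuousLinearEquiv.equivOfInverse
      ((1 : X →L[ℂ] X) + (t : ℂ) • R) ((1 : X →L[ℂ] X) - s • R) hfun hfun2 with hE
    have hEc : (E : X →L[ℂ] X) = (1 : X →L[ℂ] X) + (t : ℂ) • R := rfl
    have ht' := h E
    rw [hEc] at ht'
    have hsplit : ((A : X →L[ℂ] Y).comp ((((1 : X →L[ℂ] X) + (t : ℂ) • R)).comp (B : Y →L[ℂ] X)))
        = (A : X →L[ℂ] Y).comp (B : Y →L[ℂ] X) + (t : ℂ) • D := by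
      rw [add_comp, smul_comp, comp_add, comp_smul, hD, one_def, id_comp]
    rw [hsplit] at ht'
    -- now ht' : ‖A.comp B + t • D‖ = ‖1 + t • R‖
    set C : Y →L[ℂ] Y := (A : X →L[ℂ] Y).comp (B : Y →L[ℂ] X)
    have h1 : ‖(1 : X →L[ℂ] X)‖ = 1 := ContinuousLinearMap.norm_id
    have htD : ‖(t : ℂ) • D‖ = t * ‖D‖ := by
      have := norm_smul (t : ℂ) D
      rw [this]; simp [abs_of_pos ht]
    have htR : ‖(t : ℂ) • R‖ = t * ‖R‖ := by
      have := norm_smul (t : ℂ) R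
      rw [this]; simp [abs_of_pos ht]
    have e1 : ‖(t : ℂ) • D‖ ≤ ‖C + (t : ℂ) • D‖ + ‖C‖ := by
      calc ‖(t : ℂ) • D‖ = ‖(C + (t : ℂ) • D) - C‖ := by rw [add_sub_cancel_left]
        _ ≤ ‖C + (t : ℂ) • D‖ + ‖C‖ := norm_sub_le _ _
    have e2 : ‖(1 : X →L[ℂ] X) + (t : ℂ) • R‖ ≤ 1 + ‖(t : ℂ) • R‖ := by
      calc ‖(1 : X →L[ℂ] X) + (t : ℂ) • R‖ ≤ ‖(1 : X →L[ℂ] X)‖ + ‖(t : ℂ) • R‖ := norm_add_le _ _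
        _ = 1 + ‖(t : ℂ) • R‖ := by rw [h1]
    have e3 : ‖(t : ℂ) • R‖ ≤ ‖(1 : X →L[ℂ] X) + (t : ℂ) • R‖ + 1 := by
      calc ‖(t : ℂ) • R‖ = ‖((1 : X →L[ℂ] X) + (t : ℂ) • R) - 1‖ := by rw [add_sub_cancel_left]
        _ ≤ ‖(1 : X →L[ℂ] X) + (t : ℂ) • R‖ + ‖(1 : X →L[ℂ] X)‖ := norm_sub_le _ _
        _ = ‖(1 : X →L[ℂ] X) + (t : ℂ) • R‖ + 1 := by rw [h1]
    have e4 : ‖C + (t : ℂ) • D‖ ≤ ‖C‖ + ‖(t : ℂ) • D‖ := norm_add_le _ _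
    have hub : t * ‖D‖ ≤ t * ‖R‖ + 2 := by
      rw [← htD, ← htR]; linarith [ht'.le, ht'.ge]
    have hlb : t * ‖R‖ ≤ t * ‖D‖ + 2 := by
      rw [← htD, ← htR]; linarith [ht'.le, ht'.ge]
    rw [abs_sub_le_iff]
    constructor <;> rw [le_div_iff₀ ht] <;> nlinarith
  -- use main to conclude equality
  have habs : ∀ ε : ℝ, 0 < ε → |‖D‖ - ‖R‖| ≤ ε := by
    intro ε hε
    set t0 : ℝ := max (2 / ε) 1 with ht0
    have ht0pos : 0 < t0 := lt_of_lt_of_le one_pos (le_max_right _ _)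
    by_cases hcase : (1 : ℂ) + t0 * f x ≠ 0
    · have := main t0 ht0pos hcase
      refine this.trans ?_
      rw [div_le_iff₀ ht0pos]
      have h2 : (2 / ε) ≤ t0 := le_max_left _ _
      have h3 : (2 / ε) * ε = 2 := div_mul_cancel₀ 2 hε.ne'
      nlinarith
    · push_neg at hcase
      have hfx : f x ≠ 0 := by
        intro h0
        rw [h0] at hcase; simp at hcase
      have hne1 : (1 : ℂ) + (t0 + 1) * f x ≠ 0 := by
        intro h0
        have : ((t0 + 1 : ℝ) : ℂ) * f x = (t0 : ℂ) * f x := by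
          push_cast at h0 hcase ⊢
          linear_combination h0 - hcase
        have : ((1 : ℝ) : ℂ) * f x = 0 := by push_cast at this ⊢; linear_combination this - (0:ℂ)
        simp at this
        exact hfx this
      have ht1pos : 0 < t0 + 1 := by linarith
      have hne1' : (1 : ℂ) + ((t0 + 1 : ℝ) : ℂ) * f x ≠ 0 := by push_cast; exact hne1
      have := main (t0 + 1) ht1pos hne1'
      refine this.trans ?_
      rw [div_le_iff₀ ht1pos]
      have h2 : (2 / ε) ≤ t0 := le_max_left _ _
      have h3 : (2 / ε) * ε = 2 := div_mul_cancel₀ 2 hε.ne'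
      nlinarith
  have : |‖D‖ - ‖R‖| ≤ 0 := by
    by_contra hcon
    push_neg at hcon
    have := habs (|‖D‖ - ‖R‖| / 2) (by linarith)
    linarith
  have heq : ‖D‖ = ‖R‖ := by
    have := abs_nonneg (‖D‖ - ‖R‖)
    have h0 : |‖D‖ - ‖R‖| = 0 := le_antisymm ‹_› this
    have := abs_eq_zero.mp h0
    linarith [sub_eq_zero.mp this]
  rw [← hnD, ← hnR, heq]

set_option linter.unusedSectionVars false in
set_option linter.unusedVariables false in
theorem stmt14' (A : X ≃L[ℂ] Y) (B : Y ≃L[ℂ] X)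
    (h : ∀ T : X ≃L[ℂ] X,
      ‖(A : X →L[ℂ] Y).comp (((T : X →L[ℂ] X)).comp (B : Y →L[ℂ] X))‖
        = ‖(T : X →L[ℂ] X)‖)
    (hkey : ∀ (f : X →L[ℂ] ℂ) (x : X),
      ‖f.comp (B : Y →L[ℂ] X)‖ * ‖A x‖ = ‖f‖ * ‖x‖) :
    ∃ (U : X ≃ₗᵢ[ℂ] Y) (V : Y ≃ₗᵢ[ℂ] X) (lam mu : ℂ),
      ‖lam * mu‖ = 1 ∧ (∀ x : X, A x = lam • U x) ∧
      ∀ y : Y, B y = mu • V y := by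
  rcases subsingleton_or_nontrivial X with hX | hX
  · have hY : Subsingleton Y := A.toEquiv.symm.subsingleton
    refine ⟨⟨A.toLinearEquiv, ?_⟩, ⟨B.toLinearEquiv, ?_⟩, 1, 1, by simp, ?_, ?_⟩
    · intro x
      have hx : x = 0 := Subsingleton.elim _ _
      subst hx; simp
    · intro y
      have hy : y = 0 := Subsingleton.elim _ _
      subst hy; simp
    · intro x; simp
    · intro y; simp
  · obtain ⟨x₀, hx₀⟩ := exists_ne (0 : X)
    obtain ⟨f₀, hf₀n, hf₀x⟩ := exists_dual_vector ℂ x₀ (norm_ne_zero_iff.mpr hx₀)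
    have hx₀n : (0 : ℝ) < ‖x₀‖ := norm_pos_iff.mpr hx₀
    set c : ℝ := ‖f₀.comp (B : Y →L[ℂ] X)‖ with hc
    have hcA : c * ‖A x₀‖ = ‖x₀‖ := by
      have := hkey f₀ x₀; rwa [hf₀n, one_mul] at this
    have hAx₀ : (0 : ℝ) < ‖A x₀‖ := by
      rw [norm_pos_iff]
      simp only [ne_eq, ContinuousLinearEquiv.map_eq_zero_iff]
      exact hx₀
    have hcpos : (0 : ℝ) < c := by nlinarith
    -- A scales norms by 1/c
    have hA : ∀ x : X, ‖A x‖ = ‖x‖ / c := by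
      intro x
      have := hkey f₀ x
      rw [hf₀n, one_mul, ← hc] at this
      field_simp
      linarith [this]
    -- dual estimate
    have hdual : ∀ f : X →L[ℂ] ℂ, ‖f.comp (B : Y →L[ℂ] X)‖ = c * ‖f‖ := by
      intro f
      have h1 := hkey f x₀
      rw [hA x₀] at h1
      have : ‖f.comp (B : Y →L[ℂ] X)‖ * ‖x₀‖ = c * ‖f‖ * ‖x₀‖ := by
        field_simp at h1
        nlinarith
      exact mul_right_cancel₀ hx₀n.ne' this
    -- B scales norms by c
    have hBle : ∀ y : Y, ‖B y‖ ≤ c * ‖y‖ := by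
      intro y
      by_cases hy : B y = 0
      · rw [hy, norm_zero]; positivity
      · obtain ⟨g, hgn, hgx⟩ := exists_dual_vector ℂ (B y) (norm_ne_zero_iff.mpr hy)
        have h1 : ‖B y‖ = ‖g (B y)‖ := by rw [hgx]; simp
        have h2 : g (B y) = (g.comp (B : Y →L[ℂ] X)) y := rfl
        rw [h1, h2]
        calc ‖(g.comp (B : Y →L[ℂ] X)) y‖ ≤ ‖g.comp (B : Y →L[ℂ] X)‖ * ‖y‖ :=
              (g.comp (B : Y →L[ℂ] X)).le_opNorm y
          _ = c * ‖y‖ := by rw [hdual g, hgn, mul_one]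
    have hBge : ∀ y : Y, c * ‖y‖ ≤ ‖B y‖ := by
      intro y
      by_cases hy : y = 0
      · rw [hy]; simp
      · obtain ⟨g, hgn, hgx⟩ := exists_dual_vector ℂ y (norm_ne_zero_iff.mpr hy)
        set f : X →L[ℂ] ℂ := g.comp (B.symm : X →L[ℂ] Y) with hf
        have hfB : f.comp (B : Y →L[ℂ] X) = g := by
          ext y'; simp [hf]
        have hfn : ‖f‖ = 1 / c := by
          have := hdual f
          rw [hfB, hgn] at this
          field_simp
          linarith
        have h1 : ‖y‖ = ‖g y‖ := by rw [hgx]; simp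
        have h2 : g y = f (B y) := by
          rw [hf]; simp
        have h3 : ‖f (B y)‖ ≤ ‖f‖ * ‖B y‖ := f.le_opNorm _
        rw [hfn] at h3
        rw [h1, h2] at *
        calc c * ‖f (B y)‖ ≤ c * (1 / c * ‖B y‖) := by
              exact mul_le_mul_of_nonneg_left h3 hcpos.le
          _ = ‖B y‖ := by field_simp
    have hB : ∀ y : Y, ‖B y‖ = c * ‖y‖ := fun y => le_antisymm (hBle y) (hBge y)
    set γ : ℂ := (c : ℂ) with hγdef
    have hγ : γ ≠ 0 := by
      simp [hγdef, Complex.ofReal_ne_zero]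
      exact hcpos.ne'
    have hγn : ‖γ‖ = c := by
      rw [hγdef, Complex.norm_real, Real.norm_eq_abs, abs_of_pos hcpos]
    have hγinv : γ⁻¹ ≠ 0 := inv_ne_zero hγ
    refine ⟨⟨A.toLinearEquiv.trans (LinearEquiv.smulOfNeZero ℂ Y γ hγ), ?_⟩,
      ⟨B.toLinearEquiv.trans (LinearEquiv.smulOfNeZero ℂ X γ⁻¹ hγinv), ?_⟩,
      γ⁻¹, γ, ?_, ?_, ?_⟩
    · intro x
      simp only [LinearEquiv.trans_apply, LinearEquiv.smulOfNeZero_apply,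
        ContinuousLinearEquiv.coe_toLinearEquiv]
      have := norm_smul γ (A x)
      rw [this, hγn, hA]
      field_simp
    · intro y
      simp only [LinearEquiv.trans_apply, LinearEquiv.smulOfNeZero_apply,
        ContinuousLinearEquiv.coe_toLinearEquiv]
      have := norm_smul γ⁻¹ (B y)
      rw [this, norm_inv, hγn, hB]
      field_simp
    · rw [inv_mul_cancel₀ hγ]; simp
    · intro x
      show A x = γ⁻¹ • (γ • A x)
      rw [smul_smul, inv_mul_cancel₀ hγ, one_smul]
    · intro y
      show B y = γ • (γ⁻¹ • B y)
      rw [smul_smul, mul_inv_cancel₀ hγ, one_smul]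


theorem stmt14 (A : X ≃L[ℂ] Y) (B : Y ≃L[ℂ] X)
    (h : ∀ T : X ≃L[ℂ] X,
      ‖(A : X →L[ℂ] Y).comp (((T : X →L[ℂ] X)).comp (B : Y →L[ℂ] X))‖
        = ‖(T : X →L[ℂ] X)‖) :
    ∃ (U : X ≃ₗᵢ[ℂ] Y) (V : Y ≃ₗᵢ[ℂ] X) (lam mu : ℂ),
      ‖lam * mu‖ = 1 ∧ (∀ x : X, A x = lam • U x) ∧
      ∀ y : Y, B y = mu • V y := by
  have hkey : ∀ (f : X →L[ℂ] ℂ) (x : X),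
      ‖f.comp (B : Y →L[ℂ] X)‖ * ‖A x‖ = ‖f‖ * ‖x‖ := by
    rcases subsingleton_or_nontrivial X with hX | hX
    · intro f x
      have hf : f = 0 := by
        ext z
        have hz : z = 0 := Subsingleton.elim _ _
        simp [hz]
      have hfB : f.comp (B : Y →L[ℂ] X) = 0 := by
        ext y; simp [hf]
      simp [hf, hfB]
    · exact key14 A B h
  exact stmt14' A B h hkey
end

section
/- Let A : X → Y be a bijective bounded linear operator. If ‖Ax‖·‖(A⁻¹)*f‖ ≤ ‖x‖·‖f‖ for all x ∈ X and f ∈ X*, then A/‖A‖ is an isometry. -/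
open Metric Set Pointwise

variable {X Y : Type*} [NormedAddCommGroup X] [NormedSpace ℂ X] [CompleteSpace X]
  [NormedAddCommGroup Y] [NormedSpace ℂ Y] [CompleteSpace Y]

theorem stmt16 (A : X ≃L[ℂ] Y)
    (h : ∀ (x : X) (f : X →L[ℂ] ℂ),
      ‖A x‖ * ‖f.comp (A.symm : Y →L[ℂ] X)‖ ≤ ‖x‖ * ‖f‖) :
    ∀ x : X, ‖A x‖ = ‖(A : X →L[ℂ] Y)‖ * ‖x‖ := by
  intro x
  rcases eq_or_ne x 0 with rfl | hx
  · simp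
  obtain ⟨f, hf1, hfx⟩ := exists_dual_vector ℂ x (norm_ne_zero_iff.mpr hx)
  set g := f.comp (A.symm : Y →L[ℂ] X) with hg
  have hgAx : g (A x) = ‖x‖ := by
    simp [hg, ContinuousLinearMap.comp_apply, hfx]
  have hgpos : 0 < ‖g‖ := by
    rcases (norm_nonneg g).lt_or_eq with h' | h'
    · exact h'
    have : g = 0 := by simpa using (norm_eq_zero.mp h'.symm)
    rw [this] at hgAx
    simp at hgAx
    exact absurd (norm_eq_zero.mp (by exact_mod_cast hgAx.symm)) hx
  -- ‖x‖ ≤ ‖g‖ * ‖A x‖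
  have h1 : ‖x‖ ≤ ‖g‖ * ‖A x‖ := by
    calc ‖x‖ = ‖g (A x)‖ := by rw [hgAx]; simp
    _ ≤ ‖g‖ * ‖A x‖ := g.le_opNorm _
  -- ‖A‖ ≤ ‖g‖⁻¹
  have h2 : ‖(A : X →L[ℂ] Y)‖ ≤ ‖g‖⁻¹ := by
    apply ContinuousLinearMap.opNorm_le_bound _ (by positivity)
    intro x'
    have := h x' f
    rw [hf1, mul_one] at this
    rw [inv_mul_eq_div, le_div_iff₀ hgpos]
    exact this
  have hupper : ‖A x‖ ≤ ‖(A : X →L[ℂ] Y)‖ * ‖x‖ := (A : X →L[ℂ] Y).le_opNorm x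
  have hlower : ‖(A : X →L[ℂ] Y)‖ * ‖x‖ ≤ ‖A x‖ := by
    calc ‖(A : X →L[ℂ] Y)‖ * ‖x‖ ≤ ‖g‖⁻¹ * (‖g‖ * ‖A x‖) :=
      mul_le_mul h2 h1 (norm_nonneg x) (by positivity)
    _ = ‖A x‖ := by field_simp
  linarith
end
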